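/- Define r(ζ,η) = √2·(√3·ζ/2 + η/2) + √2·e^{2ζ/√6}·(√3·ζ/2 - η/2) - e^{2ζ/√6} + 1. Then r(ζ,η) ≥ 0 for all ζ, η ∈ [0,√2]. -/

import Mathlib

open Real Set

lemma key_aux (a : ℝ) (ha0 : 0 ≤ a) (ha1 : a ≤ 1) (t : ℝ) (ht : 0 ≤ t) :
    0 ≤ Real.exp t * (3/2 * t - a - 1) + 3/2 * t + a + 1 := by
  set G : ℝ → ℝ := fun t => Real.exp t * (3/2 * t - a + 1/2) + 3/2 with hG
  have hGd : ∀ x : ℝ, HasDerivAt G (Real.exp x * (3/2 * x - a + 2)) x := by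
    intro x
    have hin : HasDerivAt (fun x : ℝ => 3/2 * x - a + 1/2) (3/2) x := by
      simpa using ((hasDerivAt_id x).const_mul (3/2 : ℝ)).sub_const a |>.add_const (1/2)
    have h1 := (Real.hasDerivAt_exp x).mul hin
    have h2 := h1.add_const (3/2 : ℝ)
    refine h2.congr_deriv ?_
    ring
  have hGmono : MonotoneOn G (Set.Ici 0) := by
    apply monotoneOn_of_deriv_nonneg (convex_Ici 0)
    · exact (Continuous.continuousOn (by continuity))
    · intro x _
      exact (hGd x).differentiableAt.differentiableWithinAt
    · intro x hx
      rw [(hGd x).deriv]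
      have : (0:ℝ) ≤ x := le_of_lt (by simpa using hx)
      have : 0 ≤ 3/2 * x - a + 2 := by nlinarith
      positivity
  have hGpos : ∀ x ∈ Set.Ici (0:ℝ), 0 ≤ G x := by
    intro x hx
    have h0 : G 0 = 2 - a := by simp [hG]; ring
    have := hGmono (Set.self_mem_Ici) hx hx
    rw [h0] at this
    linarith
  set F : ℝ → ℝ := fun t => Real.exp t * (3/2 * t - a - 1) + 3/2 * t + a + 1 with hF
  have hFd : ∀ x : ℝ, HasDerivAt F (G x) x := by
    intro x
    have h1 : HasDerivAt (fun x : ℝ => Real.exp x * (3/2 * x - a - 1))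
        (Real.exp x * (3/2 * x - a - 1) + Real.exp x * (3/2)) x := by
      have hin : HasDerivAt (fun x : ℝ => 3/2 * x - a - 1) (3/2) x := by
        simpa using ((hasDerivAt_id x).const_mul (3/2 : ℝ)).sub_const a |>.sub_const 1
      exact (Real.hasDerivAt_exp x).mul hin
    have h2 : HasDerivAt (fun x : ℝ => 3/2 * x + a + 1) (3/2) x := by
      simpa using (((hasDerivAt_id x).const_mul (3/2 : ℝ)).add_const a).add_const 1
    have := h1.add h2
    refine (this.congr_deriv ?_).congr_of_eventuallyEq (Filter.Eventually.of_forall fun y => ?_)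
    · simp only [G]; ring
    · simp only [F, Pi.add_apply]; ring
  have hFmono : MonotoneOn F (Set.Ici 0) := by
    apply monotoneOn_of_deriv_nonneg (convex_Ici 0)
    · exact (Continuous.continuousOn (by continuity))
    · intro x _
      exact (hFd x).differentiableAt.differentiableWithinAt
    · intro x hx
      rw [(hFd x).deriv]
      exact hGpos x (le_of_lt (by simpa using hx))
  have h0 : F 0 = 0 := by simp [hF]; ring
  have := hFmono (Set.self_mem_Ici) ht ht
  rw [h0] at this
  exact this

theorem r_nonneg (ζ η : ℝ) (hζ : ζ ∈ Set.Icc 0 (Real.sqrt 2))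
    (hη : η ∈ Set.Icc 0 (Real.sqrt 2)) :
    0 ≤ Real.sqrt 2 * (Real.sqrt 3 * ζ / 2 + η / 2)
      + Real.sqrt 2 * Real.exp (2 * ζ / Real.sqrt 6) * (Real.sqrt 3 * ζ / 2 - η / 2)
      - Real.exp (2 * ζ / Real.sqrt 6) + 1 := by
  obtain ⟨hζ0, hζ2⟩ := hζ
  obtain ⟨hη0, hη2⟩ := hη
  have h6pos : (0:ℝ) < Real.sqrt 6 := Real.sqrt_pos.mpr (by norm_num)
  have h2pos : (0:ℝ) < Real.sqrt 2 := Real.sqrt_pos.mpr (by norm_num)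
  have h23 : Real.sqrt 2 * Real.sqrt 3 = Real.sqrt 6 := by
    rw [← Real.sqrt_mul (by norm_num)]; norm_num
  have h66 : Real.sqrt 6 * Real.sqrt 6 = 6 := Real.mul_self_sqrt (by norm_num)
  have h22 : Real.sqrt 2 * Real.sqrt 2 = 2 := Real.mul_self_sqrt (by norm_num)
  set t := 2 * ζ / Real.sqrt 6 with hti
  set a := Real.sqrt 2 * η / 2 with hai
  have ht0 : 0 ≤ t := by positivity
  have ha0 : 0 ≤ a := by positivity
  have ha1 : a ≤ 1 := by nlinarith
  have key := key_aux a ha0 ha1 t ht0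
  have hz : Real.sqrt 2 * (Real.sqrt 3 * ζ) / 2 = 3/2 * t := by
    rw [hti]
    field_simp
    linear_combination (ζ*Real.sqrt 6)*h23 + (ζ)*h66
  nlinarith [Real.exp_pos t]
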